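/- Let K ∈ ℝ^{T×d}, let m ≥ 1, and let Q_1, …, Q_m ∈ ℝ^{T×d} each have full column rank d. Let Q ∈ ℝ^{mT×d} be the vertical stacking of Q_1, …, Q_m. Then for every R ≤ d, inf over A, B_1, …, B_m ∈ ℝ^{d×R} of Σ_{i=1}^{m} ‖K A B_iᵀ Q_iᵀ − K Q_iᵀ‖_F² equals inf over A, B ∈ ℝ^{d×R} of ‖K A Bᵀ Qᵀ − K Qᵀ‖_F²; that is, in grouped-query attention, the grouped minimization with separate matrices B_i per query head achieves the same optimal value as the single-B minimization with stacked queries. -/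

import Mathlib

open Matrix Finset

/-- The Frobenius norm of a real matrix. -/
noncomputable def frobNorm {α β : Type*} [Fintype α] [Fintype β]
    (M : Matrix α β ℝ) : ℝ :=
  Real.sqrt (∑ i, ∑ j, (M i j) ^ 2)

/-- `IsSVD M U σ V` states that `M = U * diag(σ₁, …, σ_r) * Vᵀ` is a singular value
decomposition of `M` with inner dimension `r`: `U` and `V` have orthonormal columns and
the singular values `σ₁ ≥ σ₂ ≥ … ≥ σ_r ≥ 0` are given 1-indexed by `σ : ℕ → ℝ`,
padded with zeros beyond index `r` (and with the irrelevant value `σ 0` unconstrained). -/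
structure IsSVD {α β : Type*} [Fintype α] [Fintype β] {r : ℕ}
    (M : Matrix α β ℝ) (U : Matrix α (Fin r) ℝ) (σ : ℕ → ℝ)
    (V : Matrix β (Fin r) ℝ) : Prop where
  factorization : M = U * Matrix.diagonal (fun i : Fin r => σ ((i : ℕ) + 1)) * Vᵀ
  leftOrtho : Uᵀ * U = 1
  rightOrtho : Vᵀ * V = 1
  antitone : ∀ i j : ℕ, 1 ≤ i → i ≤ j → σ j ≤ σ i
  nonneg : ∀ i : ℕ, 1 ≤ i → 0 ≤ σ i
  padZero : ∀ i : ℕ, r < i → σ i = 0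

/-- The submatrix made of the first `R` columns of a matrix. -/
def firstCols {α : Type*} {q : ℕ} (M : Matrix α (Fin q) ℝ) {R : ℕ} (h : R ≤ q) :
    Matrix α (Fin R) ℝ :=
  M.submatrix id (Fin.castLE h)


noncomputable def frobSq {α β : Type*} [Fintype α] [Fintype β] (M : Matrix α β ℝ) : ℝ :=
  ∑ i, ∑ j, (M i j) ^ 2

lemma frobSq_eq_trace {α β : Type*} [Fintype α] [Fintype β] (M : Matrix α β ℝ) :
    frobSq M = (Mᵀ * M).trace := by
  simp only [Matrix.trace, Matrix.diag, Matrix.mul_apply, Matrix.transpose_apply, frobSq, sq]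
  rw [Finset.sum_comm]

lemma diag_tt_nonneg {α β : Type*} [Fintype α] [Fintype β] (Y : Matrix α β ℝ) (j : β) :
    0 ≤ (Yᵀ * Y) j j := by
  rw [Matrix.mul_apply]
  apply Finset.sum_nonneg; intro i _
  simp [Matrix.transpose_apply, mul_self_nonneg]

lemma frobSq_neg {α β : Type*} [Fintype α] [Fintype β] (M : Matrix α β ℝ) :
    frobSq (-M) = frobSq M := by
  simp [frobSq]

lemma ortho_absorb {α β γ : Type*} [Fintype α] [Fintype β] [Fintype γ] [DecidableEq β]
    {U : Matrix α β ℝ} (h : Uᵀ * U = 1) (Z : Matrix β γ ℝ) : Uᵀ * (U * Z) = Z := by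
  rw [← Matrix.mul_assoc, h, Matrix.one_mul]


lemma svd_r_le_rank {α β : Type*} [Fintype α] [Fintype β] [DecidableEq β] {r : ℕ}
    {N : Matrix α β ℝ} {U : Matrix α (Fin r) ℝ} {σ : ℕ → ℝ} {V : Matrix β (Fin r) ℝ}
    (h : IsSVD N U σ V) (hpos : ∀ k : ℕ, 1 ≤ k → k ≤ r → σ k ≠ 0) :
    r ≤ N.rank := by
  have hD : Uᵀ * (N * V) = Matrix.diagonal (fun k : Fin r => σ ((k : ℕ) + 1)) := by
    rw [h.factorization]
    simp only [Matrix.mul_assoc]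
    rw [ortho_absorb h.leftOrtho]
    rw [← Matrix.mul_assoc, Matrix.mul_assoc _ Vᵀ V, h.rightOrtho, Matrix.mul_one]
  have hfull : (Matrix.diagonal (fun k : Fin r => σ ((k : ℕ) + 1))).rank = r := by
    rw [Matrix.rank_diagonal]
    have hne : ∀ k : Fin r, σ ((k : ℕ) + 1) ≠ 0 := fun k => hpos _ (by omega) (by omega)
    have := Fintype.card_congr (Equiv.subtypeUnivEquiv hne)
    rw [this, Fintype.card_fin]
  calc r = (Uᵀ * (N * V)).rank := by rw [hD, hfull]
  _ ≤ (N * V).rank := Matrix.rank_mul_le_right _ _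
  _ ≤ N.rank := Matrix.rank_mul_le_left _ _

lemma majorize {r R : ℕ} (a w : Fin r → ℝ) (haa : ∀ i j : Fin r, i ≤ j → a j ≤ a i)
    (ha0 : ∀ j, 0 ≤ a j) (hw0 : ∀ j, 0 ≤ w j) (hw1 : ∀ j, w j ≤ 1)
    (hws : ∑ j, w j ≤ (R : ℝ)) :
    ∑ j, a j * w j ≤ ∑ j ∈ Finset.univ.filter (fun j : Fin r => (j : ℕ) < R), a j := by
  rcases le_or_gt r R with hRr | hRr
  · have hfilter : Finset.univ.filter (fun j : Fin r => (j : ℕ) < R) = Finset.univ := by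
      apply Finset.filter_true_of_mem
      intro j _
      omega
    rw [hfilter]
    apply Finset.sum_le_sum
    intro j _
    calc a j * w j ≤ a j * 1 := mul_le_mul_of_nonneg_left (hw1 j) (ha0 j)
    _ = a j := mul_one _
  · set ρ : Fin r := ⟨R, hRr⟩ with hρ
    set F := Finset.univ.filter (fun j : Fin r => (j : ℕ) < R) with hF
    set Fc := Finset.univ.filter (fun j : Fin r => ¬ (j : ℕ) < R) with hFc
    have hsplit : ∀ f : Fin r → ℝ, ∑ j, f j = ∑ j ∈ F, f j + ∑ j ∈ Fc, f j := by
      intro f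
      rw [hF, hFc, Finset.sum_filter_add_sum_filter_not]
    have hFcard : (F.card : ℝ) = R := by
      have : F = Finset.Iio ρ := by
        ext j
        simp [hF, Finset.mem_Iio, Fin.lt_def, hρ]
      rw [this, Fin.card_Iio]
    have h1 : ∑ j ∈ Fc, a j * w j ≤ a ρ * ∑ j ∈ Fc, w j := by
      rw [Finset.mul_sum]
      apply Finset.sum_le_sum
      intro j hj
      rw [hFc, Finset.mem_filter] at hj
      have : a j ≤ a ρ := haa ρ j (by rw [Fin.le_def]; simpa [hρ] using Nat.le_of_not_lt hj.2)
      exact mul_le_mul_of_nonneg_right this (hw0 j)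
    have h2 : ∑ j ∈ Fc, w j ≤ (R : ℝ) - ∑ j ∈ F, w j := by
      have := hsplit w
      linarith
    have h3 : a ρ * ((R : ℝ) - ∑ j ∈ F, w j) = ∑ j ∈ F, a ρ * (1 - w j) := by
      have he : ∑ j ∈ F, a ρ * (1 - w j) = (F.card : ℝ) * a ρ - a ρ * ∑ j ∈ F, w j := by
        simp [mul_sub, Finset.sum_sub_distrib, Finset.mul_sum, Finset.sum_const, nsmul_eq_mul,
          mul_comm]
      rw [he, hFcard]
      ring
    have h4 : ∑ j ∈ F, a ρ * (1 - w j) ≤ ∑ j ∈ F, a j * (1 - w j) := by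
      apply Finset.sum_le_sum
      intro j hj
      rw [hF, Finset.mem_filter] at hj
      have hja : a ρ ≤ a j := haa j ρ (by rw [Fin.le_def]; simpa [hρ] using Nat.le_of_lt hj.2)
      have hw : (0:ℝ) ≤ 1 - w j := by linarith [hw1 j]
      exact mul_le_mul_of_nonneg_right hja hw
    have h5 : a ρ * (∑ j ∈ Fc, w j) ≤ a ρ * ((R:ℝ) - ∑ j ∈ F, w j) :=
      mul_le_mul_of_nonneg_left h2 (ha0 ρ)
    calc ∑ j, a j * w j = ∑ j ∈ F, a j * w j + ∑ j ∈ Fc, a j * w j := hsplit _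
    _ ≤ ∑ j ∈ F, a j * w j + a ρ * ∑ j ∈ Fc, w j := by linarith
    _ ≤ ∑ j ∈ F, a j * w j + a ρ * ((R:ℝ) - ∑ j ∈ F, w j) := by linarith
    _ = ∑ j ∈ F, a j * w j + ∑ j ∈ F, a ρ * (1 - w j) := by rw [h3]
    _ ≤ ∑ j ∈ F, a j * w j + ∑ j ∈ F, a j * (1 - w j) := by linarith
    _ = ∑ j ∈ F, a j := by
        rw [← Finset.sum_add_distrib]
        apply Finset.sum_congr rfl
        intro j _
        ring

lemma frobSq_nonneg {α β : Type*} [Fintype α] [Fintype β] (M : Matrix α β ℝ) : 0 ≤ frobSq M := by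
  apply Finset.sum_nonneg; intro i _; apply Finset.sum_nonneg; intro j _; positivity

lemma proj_split {α β γ : Type*} [Fintype α] [Fintype β] [Fintype γ] [DecidableEq γ]
    {P : Matrix α γ ℝ} (h : Pᵀ * P = 1) (X : Matrix α β ℝ) :
    frobSq X = frobSq (Pᵀ * X) + frobSq (X - P * (Pᵀ * X)) := by
  rw [frobSq_eq_trace, frobSq_eq_trace, frobSq_eq_trace]
  have h1 : (X - P * (Pᵀ * X))ᵀ * (X - P * (Pᵀ * X))
      = Xᵀ * X - (Pᵀ * X)ᵀ * (Pᵀ * X) := by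
    simp only [Matrix.transpose_sub, Matrix.transpose_mul, Matrix.transpose_transpose,
      Matrix.sub_mul, Matrix.mul_sub, Matrix.mul_assoc, ortho_absorb h]
    abel
  rw [h1, Matrix.trace_sub]
  ring

theorem ey_lower {α β : Type*} [Fintype α] [Fintype β] {r r' R : ℕ}
    {M N : Matrix α β ℝ}
    {U : Matrix α (Fin r) ℝ} {σ : ℕ → ℝ} {V : Matrix β (Fin r) ℝ}
    (hsvd : IsSVD M U σ V)
    {U' : Matrix α (Fin r') ℝ} {σ' : ℕ → ℝ} {V' : Matrix β (Fin r') ℝ}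
    (hsvd' : IsSVD N U' σ' V') (hr' : r' ≤ R) :
    ∑ j ∈ Finset.univ.filter (fun j : Fin r => R ≤ (j : ℕ)), σ ((j : ℕ) + 1) ^ 2
      ≤ frobSq (N - M) := by
  classical
  set D : Matrix (Fin r) (Fin r) ℝ :=
    Matrix.diagonal (fun i : Fin r => σ ((i : ℕ) + 1)) with hD
  -- projection absorbs N
  have hPN : U' * (U'ᵀ * N) = N := by
    conv_lhs => rw [hsvd'.factorization]
    conv_rhs => rw [hsvd'.factorization]
    simp only [Matrix.mul_assoc, ortho_absorb hsvd'.leftOrtho]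
  -- split of the residual
  have hsplitX := proj_split hsvd'.leftOrtho (N - M)
  have hsplitM := proj_split hsvd'.leftOrtho M
  have hW2M : (N - M) - U' * (U'ᵀ * (N - M)) = -(M - U' * (U'ᵀ * M)) := by
    simp only [Matrix.mul_sub]
    rw [hPN]
    abel
  rw [hW2M, frobSq_neg] at hsplitX
  -- frobSq M via the SVD
  have hFrobM : frobSq M = ∑ j : Fin r, σ ((j : ℕ) + 1) ^ 2 := by
    rw [frobSq_eq_trace]
    have h1 : Mᵀ * M = V * (D * (D * Vᵀ)) := by
      conv_lhs => rw [hsvd.factorization]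
      simp only [Matrix.transpose_mul, Matrix.transpose_transpose, hD,
        Matrix.diagonal_transpose, Matrix.mul_assoc, ortho_absorb hsvd.leftOrtho]
    rw [h1, Matrix.trace_mul_comm]
    rw [Matrix.mul_assoc, Matrix.mul_assoc, hsvd.rightOrtho, Matrix.mul_one]
    rw [hD, Matrix.diagonal_mul_diagonal, Matrix.trace_diagonal]
    apply Finset.sum_congr rfl
    intro j _
    ring
  -- frobSq (U'ᵀ M) via the SVD
  have hFrobPM : frobSq (U'ᵀ * M)
      = ∑ j : Fin r, σ ((j : ℕ) + 1) ^ 2 * ((U'ᵀ * U)ᵀ * (U'ᵀ * U)) j j := by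
    rw [frobSq_eq_trace]
    have h1 : (U'ᵀ * M)ᵀ * (U'ᵀ * M)
        = V * ((D * ((U'ᵀ * U)ᵀ * ((U'ᵀ * U) * D))) * Vᵀ) := by
      conv_lhs => rw [hsvd.factorization]
      simp only [Matrix.transpose_mul, Matrix.transpose_transpose, hD,
        Matrix.diagonal_transpose, Matrix.mul_assoc]
    rw [h1, Matrix.trace_mul_comm, Matrix.mul_assoc, hsvd.rightOrtho, Matrix.mul_one]
    rw [← Matrix.mul_assoc ((U'ᵀ * U)ᵀ) (U'ᵀ * U) D]
    simp only [Matrix.trace, Matrix.diag_apply, Matrix.diagonal_mul, Matrix.mul_diagonal, hD]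
    apply Finset.sum_congr rfl
    intro j _
    ring
  -- bounds on the weights
  have hw0 : ∀ j : Fin r, 0 ≤ ((U'ᵀ * U)ᵀ * (U'ᵀ * U)) j j := fun j => diag_tt_nonneg _ j
  have hw1 : ∀ j : Fin r, ((U'ᵀ * U)ᵀ * (U'ᵀ * U)) j j ≤ 1 := by
    have hZ : (U - U' * (U'ᵀ * U))ᵀ * (U - U' * (U'ᵀ * U))
        = 1 - (U'ᵀ * U)ᵀ * (U'ᵀ * U) := by
      simp only [Matrix.transpose_sub, Matrix.transpose_mul, Matrix.transpose_transpose,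
        Matrix.sub_mul, Matrix.mul_sub, Matrix.mul_assoc, ortho_absorb hsvd'.leftOrtho,
        hsvd.leftOrtho]
      abel
    intro j
    have h0 := diag_tt_nonneg (U - U' * (U'ᵀ * U)) j
    rw [hZ] at h0
    simp only [Matrix.sub_apply, Matrix.one_apply_eq] at h0
    linarith
  have hwsum : ∑ j : Fin r, ((U'ᵀ * U)ᵀ * (U'ᵀ * U)) j j ≤ (R : ℝ) := by
    have htr : ∑ j : Fin r, ((U'ᵀ * U)ᵀ * (U'ᵀ * U)) j j
        = ((U'ᵀ * U) * (U'ᵀ * U)ᵀ).trace := by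
      rw [← Matrix.trace_mul_comm]
      simp [Matrix.trace, Matrix.diag_apply]
    have hkk : ∀ k : Fin r', ((U'ᵀ * U) * (U'ᵀ * U)ᵀ) k k ≤ 1 := by
      have hZ : (U' - U * (Uᵀ * U'))ᵀ * (U' - U * (Uᵀ * U'))
          = 1 - (U'ᵀ * U) * (U'ᵀ * U)ᵀ := by
        simp only [Matrix.transpose_sub, Matrix.transpose_mul, Matrix.transpose_transpose,
          Matrix.sub_mul, Matrix.mul_sub, Matrix.mul_assoc, ortho_absorb hsvd.leftOrtho,
          hsvd'.leftOrtho]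
        abel
      intro k
      have h0 := diag_tt_nonneg (U' - U * (Uᵀ * U')) k
      rw [hZ] at h0
      simp only [Matrix.sub_apply, Matrix.one_apply_eq] at h0
      linarith
    rw [htr]
    calc ((U'ᵀ * U) * (U'ᵀ * U)ᵀ).trace = ∑ k : Fin r', ((U'ᵀ * U) * (U'ᵀ * U)ᵀ) k k := by
          simp [Matrix.trace, Matrix.diag_apply]
    _ ≤ ∑ _k : Fin r', (1 : ℝ) := Finset.sum_le_sum (fun k _ => hkk k)
    _ = (r' : ℝ) := by simp
    _ ≤ (R : ℝ) := by exact_mod_cast hr'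
  -- majorization
  have hmaj := majorize (fun j : Fin r => σ ((j : ℕ) + 1) ^ 2)
      (fun j => ((U'ᵀ * U)ᵀ * (U'ᵀ * U)) j j)
      (fun i j hij => by
        have h1 : σ ((j : ℕ) + 1) ≤ σ ((i : ℕ) + 1) :=
          hsvd.antitone _ _ (by omega) (by simp only [Fin.le_def] at hij; omega)
        have h2 : 0 ≤ σ ((j : ℕ) + 1) := hsvd.nonneg _ (by omega)
        exact pow_le_pow_left₀ h2 h1 2)
      (fun j => sq_nonneg _) hw0 hw1 hwsum
  -- assemble
  have hfilter : Finset.univ.filter (fun j : Fin r => R ≤ (j : ℕ))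
      = Finset.univ.filter (fun j : Fin r => ¬ ((j : ℕ) < R)) := by
    apply Finset.filter_congr
    intro j _
    simp [Nat.not_lt]
  have hsum2 : ∑ j ∈ Finset.univ.filter (fun j : Fin r => (j : ℕ) < R), σ ((j : ℕ) + 1) ^ 2
      + ∑ j ∈ Finset.univ.filter (fun j : Fin r => R ≤ (j : ℕ)), σ ((j : ℕ) + 1) ^ 2
      = ∑ j : Fin r, σ ((j : ℕ) + 1) ^ 2 := by
    rw [hfilter]
    exact Finset.sum_filter_add_sum_filter_not _ _ _
  have hge : frobSq M - frobSq (U'ᵀ * M) ≤ frobSq (N - M) := by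
    have hnn := frobSq_nonneg (U'ᵀ * (N - M))
    linarith [hsplitX, hsplitM]
  have hle : frobSq (U'ᵀ * M)
      ≤ ∑ j ∈ Finset.univ.filter (fun j : Fin r => (j : ℕ) < R), σ ((j : ℕ) + 1) ^ 2 := by
    rw [hFrobPM]
    exact hmaj
  linarith [hge, hle, hsum2, hFrobM]

lemma mem_iff_lt_card {n : ℕ} (S : Finset (Fin n))
    (h : ∀ i j : Fin n, i ≤ j → j ∈ S → i ∈ S) (i : Fin n) :
    i ∈ S ↔ (i : ℕ) < S.card := by
  constructor
  · intro hi
    have hsub : Finset.Iic i ⊆ S := fun j hj => h j i (Finset.mem_Iic.mp hj) hi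
    have := Finset.card_le_card hsub
    rw [Fin.card_Iic] at this; omega
  · intro hlt
    by_contra hi
    have hsub : S ⊆ Finset.Iio i := by
      intro j hj
      rw [Finset.mem_Iio]
      rcases lt_or_ge j i with h' | h'
      · exact h'
      · exact absurd (h i j h' hj) hi
    have := Finset.card_le_card hsub
    rw [Fin.card_Iio] at this; omega

lemma sum_trunc {n r : ℕ} (h : r ≤ n) (F : Fin n → ℝ)
    (hz : ∀ k : Fin n, r ≤ (k : ℕ) → F k = 0) :
    ∑ k, F k = ∑ k : Fin r, F (Fin.castLE h k) := by
  have h2 : ∑ k : Fin r, F (Fin.castLE h k) = ∑ k ∈ Finset.univ.map (Fin.castLEEmb h), F k := by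
    rw [Finset.sum_map]; rfl
  rw [h2]
  symm
  apply Finset.sum_subset (Finset.subset_univ _)
  intro k _ hk
  apply hz
  by_contra hlt
  push_neg at hlt
  exact hk (Finset.mem_map.mpr ⟨⟨(k : ℕ), hlt⟩, Finset.mem_univ _, by simp [Fin.castLEEmb]⟩)

theorem exists_svd {α ι : Type*} [Fintype α] [Fintype ι] [DecidableEq ι]
    (M : Matrix α ι ℝ) :
    ∃ (r : ℕ) (U : Matrix α (Fin r) ℝ) (σ : ℕ → ℝ) (V : Matrix ι (Fin r) ℝ),
      IsSVD M U σ V ∧ ∀ k : ℕ, 1 ≤ k → k ≤ r → σ k ≠ 0 := by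
  classical
  set n := Fintype.card ι with hn
  set G : Matrix ι ι ℝ := Mᵀ * M with hGdef
  have hGher : G.IsHermitian := by
    rw [hGdef, ← Matrix.conjTranspose_eq_transpose_of_trivial M]
    exact Matrix.isHermitian_conjTranspose_mul_self M
  set lam : ι → ℝ := hGher.eigenvalues with hlam
  set W : Matrix ι ι ℝ := (hGher.eigenvectorUnitary : Matrix ι ι ℝ) with hW
  have hlamnn : ∀ i, 0 ≤ lam i := by
    intro i
    have hps : G.PosSemidef := by
      have := Matrix.posSemidef_conjTranspose_mul_self M
      rwa [Matrix.conjTranspose_eq_transpose_of_trivial] at this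
    exact hps.eigenvalues_nonneg i
  have hspec : G = W * Matrix.diagonal lam * Wᵀ := by
    have := hGher.spectral_theorem
    simpa [Matrix.star_eq_conjTranspose, Matrix.conjTranspose_eq_transpose_of_trivial] using this
  have hWtW : Wᵀ * W = 1 := by
    have h1 := Matrix.mem_unitaryGroup_iff'.mp hGher.eigenvectorUnitary.2
    rwa [Matrix.star_eq_conjTranspose, Matrix.conjTranspose_eq_transpose_of_trivial] at h1
  have hWWt : W * Wᵀ = 1 := by
    have h1 := Matrix.mem_unitaryGroup_iff.mp hGher.eigenvectorUnitary.2
    rwa [Matrix.star_eq_conjTranspose, Matrix.conjTranspose_eq_transpose_of_trivial] at h1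
  have hGW : G * W = W * Matrix.diagonal lam := by
    rw [hspec, Matrix.mul_assoc, Matrix.mul_assoc, hWtW, Matrix.mul_one]
  -- sorting
  obtain ⟨g, hganti⟩ : ∃ g : Fin n ≃ ι, Antitone (lam ∘ g) := by
    let e := (Fintype.equivFin ι).symm
    let f : Fin n → ℝ := fun k => -lam (e k)
    refine ⟨(Tuple.sort f).trans e, ?_⟩
    have h := Tuple.monotone_sort f
    intro i j hij
    have := h hij
    simp only [Function.comp_apply, f] at this ⊢
    simp only [Equiv.trans_apply]
    linarith
  set S : Finset (Fin n) := Finset.univ.filter (fun k => lam (g k) ≠ 0) with hS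
  set r := S.card with hr
  have hrn : r ≤ n := by
    calc r ≤ (Finset.univ : Finset (Fin n)).card := Finset.card_le_card (Finset.filter_subset _ _)
    _ = n := by simp
  have hmem : ∀ k : Fin n, lam (g k) ≠ 0 ↔ (k : ℕ) < r := by
    intro k
    have hdc : ∀ i j : Fin n, i ≤ j → j ∈ S → i ∈ S := by
      intro i j hij hj
      rw [hS, Finset.mem_filter] at hj ⊢
      refine ⟨Finset.mem_univ _, ?_⟩
      have h1 : lam (g j) ≤ lam (g i) := hganti hij
      have h2 : 0 < lam (g j) := lt_of_le_of_ne (hlamnn _) (Ne.symm hj.2)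
      linarith
    have := mem_iff_lt_card S hdc k
    rw [hS, Finset.mem_filter] at this
    constructor
    · intro hne; exact this.mp ⟨Finset.mem_univ _, hne⟩
    · intro hlt; exact (this.mpr hlt).2
  set σnat : ℕ → ℝ := fun j =>
    if hj : 1 ≤ j ∧ j ≤ r then Real.sqrt (lam (g ⟨j - 1, by omega⟩)) else 0 with hσnat
  have hσk : ∀ k : Fin r, σnat ((k : ℕ) + 1) = Real.sqrt (lam (g (Fin.castLE hrn k))) := by
    intro k
    have hk : 1 ≤ (k : ℕ) + 1 ∧ (k : ℕ) + 1 ≤ r := ⟨Nat.le_add_left _ _, k.2⟩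
    rw [hσnat]
    simp only [hk, dif_pos]
    congr 1
  have hlampos : ∀ k : Fin r, 0 < lam (g (Fin.castLE hrn k)) := by
    intro k
    refine lt_of_le_of_ne (hlamnn _) (Ne.symm ?_)
    exact (hmem _).mpr (by simpa using k.2)
  have hσpos : ∀ k : Fin r, 0 < σnat ((k : ℕ) + 1) := by
    intro k; rw [hσk]; exact Real.sqrt_pos.mpr (hlampos k)
  set V : Matrix ι (Fin r) ℝ := Matrix.of fun i k => W i (g (Fin.castLE hrn k)) with hV
  set Dσ : Matrix (Fin r) (Fin r) ℝ := Matrix.diagonal (fun k : Fin r => σnat ((k : ℕ) + 1)) with hDσ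
  set Dinv : Matrix (Fin r) (Fin r) ℝ :=
    Matrix.diagonal (fun k : Fin r => (σnat ((k : ℕ) + 1))⁻¹) with hDinv
  set U : Matrix α (Fin r) ℝ := M * V * Dinv with hU
  have hVtV : Vᵀ * V = 1 := by
    ext j k
    have h1 : (Vᵀ * V) j k = (Wᵀ * W) (g (Fin.castLE hrn j)) (g (Fin.castLE hrn k)) := by
      simp [Matrix.mul_apply, hV]
    rw [h1, hWtW]
    by_cases h : j = k
    · subst h; simp
    · have hne : g (Fin.castLE hrn j) ≠ g (Fin.castLE hrn k) := by
        intro hc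
        exact h (Fin.castLE_injective hrn (g.injective hc))
      simp [Matrix.one_apply, hne, h]
  have hGV : G * V = V * Matrix.diagonal (fun k : Fin r => lam (g (Fin.castLE hrn k))) := by
    ext i k
    have h1 : (G * V) i k = (G * W) i (g (Fin.castLE hrn k)) := by
      simp [Matrix.mul_apply, hV]
    rw [h1, hGW, Matrix.mul_diagonal, Matrix.mul_diagonal]
    rfl
  have hDinvT : Dinvᵀ = Dinv := by rw [hDinv, Matrix.diagonal_transpose]
  have hUtU : Uᵀ * U = 1 := by
    have h1 : Uᵀ * U = Dinv * (Vᵀ * (G * V)) * Dinv := by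
      rw [hGdef]
      simp only [hU, Matrix.transpose_mul, hDinvT, Matrix.mul_assoc]
    rw [h1, hGV, ← Matrix.mul_assoc Vᵀ V, hVtV, Matrix.one_mul, hDinv]
    rw [Matrix.diagonal_mul_diagonal, Matrix.diagonal_mul_diagonal]
    have hfun : (fun k : Fin r => (σnat ((k : ℕ) + 1))⁻¹ *
        lam (g (Fin.castLE hrn k)) * (σnat ((k : ℕ) + 1))⁻¹) = fun _ => 1 := by
      funext k
      have hs := hσpos k
      have hl : lam (g (Fin.castLE hrn k)) = σnat ((k : ℕ) + 1) ^ 2 := by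
        rw [hσk, Real.sq_sqrt (hlamnn _)]
      rw [hl]
      field_simp
    rw [hfun, Matrix.diagonal_one]
  have hMWcol : ∀ i : ι, lam i = 0 → ∀ a : α, (M * W) a i = 0 := by
    intro i hlam0 a
    have hdiag : (M * W)ᵀ * (M * W) = Matrix.diagonal lam := by
      calc (M * W)ᵀ * (M * W) = Wᵀ * (G * W) := by
            rw [hGdef]
            simp only [Matrix.transpose_mul, Matrix.mul_assoc]
      _ = Matrix.diagonal lam := by rw [hGW, ← Matrix.mul_assoc, hWtW, Matrix.one_mul]
    have h1 : ∑ b, (M * W) b i ^ 2 = 0 := by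
      have h2 := congrFun (congrFun hdiag i) i
      rw [Matrix.mul_apply] at h2
      simp only [Matrix.transpose_apply, Matrix.diagonal_apply_eq] at h2
      calc ∑ b, (M * W) b i ^ 2 = ∑ b, (M * W) b i * (M * W) b i := by
            apply Finset.sum_congr rfl; intro b _; ring
      _ = lam i := h2
      _ = 0 := hlam0
    have h3 : ∀ b ∈ Finset.univ, (0:ℝ) ≤ (M * W) b i ^ 2 := fun b _ => sq_nonneg _
    have h4 := (Finset.sum_eq_zero_iff_of_nonneg h3).mp h1 a (Finset.mem_univ a)
    exact pow_eq_zero_iff (two_ne_zero) |>.mp h4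
  have hfact : M = U * Dσ * Vᵀ := by
    have hUDσ : U * Dσ = M * V := by
      rw [hU, Matrix.mul_assoc, hDinv, hDσ, Matrix.diagonal_mul_diagonal]
      have : (fun k : Fin r => (σnat ((k : ℕ) + 1))⁻¹ * σnat ((k : ℕ) + 1)) = fun _ => 1 := by
        funext k; exact inv_mul_cancel₀ (ne_of_gt (hσpos k))
      rw [this, Matrix.diagonal_one, Matrix.mul_one]
    rw [hUDσ]
    ext a b
    have hMWW : M = M * W * Wᵀ := by rw [Matrix.mul_assoc, hWWt, Matrix.mul_one]
    have hlhs : M a b = ∑ k : Fin n, (M * W) a (g k) * W b (g k) := by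
      conv_lhs => rw [hMWW]
      rw [Matrix.mul_apply]
      simp only [Matrix.transpose_apply]
      exact (Equiv.sum_comp g (fun i => (M * W) a i * W b i)).symm
    rw [hlhs]
    rw [sum_trunc hrn _ (by
      intro k hk
      have hlam0 : lam (g k) = 0 := by
        by_contra hne
        have := (hmem k).mp hne
        omega
      rw [hMWcol (g k) hlam0 a, zero_mul])]
    rw [Matrix.mul_apply]
    apply Finset.sum_congr rfl
    intro k _
    simp [hV, Matrix.mul_apply, Matrix.transpose_apply]
  refine ⟨r, U, σnat, V, ⟨hfact, hUtU, hVtV, ?_, ?_, ?_⟩, ?_⟩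
  · -- antitone
    intro i j hi hij
    rw [hσnat]
    dsimp only
    split_ifs with h1 h2 h2
    · apply Real.sqrt_le_sqrt
      exact hganti (by simp only [Fin.mk_le_mk]; omega)
    · omega
    · exact Real.sqrt_nonneg _
    · exact le_refl _
  · -- nonneg
    intro i hi
    rw [hσnat]
    dsimp only
    split_ifs
    · exact Real.sqrt_nonneg _
    · exact le_refl _
  · -- padZero
    intro i hri
    rw [hσnat]
    dsimp only
    split_ifs with h
    · omega
    · rfl
  · -- positivity
    intro k hk1 hkr
    rw [hσnat]
    dsimp only
    split_ifs with h
    · have hkm : (k - 1 : ℕ) < r := by omega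
      have hne : lam (g ⟨k - 1, by omega⟩) ≠ 0 := (hmem _).mpr (by simpa using hkm)
      have hpos : 0 < lam (g ⟨k - 1, by omega⟩) := lt_of_le_of_ne (hlamnn _) (Ne.symm hne)
      exact ne_of_gt (Real.sqrt_pos.mpr hpos)
    · exact absurd ⟨hk1, hkr⟩ h


lemma frobSq_UDV {α β : Type*} [Fintype α] [Fintype β] {r : ℕ}
    {U : Matrix α (Fin r) ℝ} {V : Matrix β (Fin r) ℝ}
    (hU : Uᵀ * U = 1) (hV : Vᵀ * V = 1) (dv : Fin r → ℝ) :
    frobSq (U * Matrix.diagonal dv * Vᵀ) = ∑ j, dv j ^ 2 := by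
  rw [frobSq_eq_trace]
  have h1 : (U * Matrix.diagonal dv * Vᵀ)ᵀ * (U * Matrix.diagonal dv * Vᵀ)
      = V * (Matrix.diagonal dv * (Matrix.diagonal dv * Vᵀ)) := by
    simp only [Matrix.transpose_mul, Matrix.transpose_transpose, Matrix.diagonal_transpose,
      Matrix.mul_assoc, ortho_absorb hU]
  rw [h1, Matrix.trace_mul_comm, Matrix.mul_assoc, Matrix.mul_assoc, hV, Matrix.mul_one]
  rw [Matrix.diagonal_mul_diagonal, Matrix.trace_diagonal]
  exact Finset.sum_congr rfl (fun j _ => by ring)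

theorem ey_upper {d : ℕ} {α ι : Type*} [Fintype α] [Fintype ι] {r : ℕ} (R : ℕ)
    (K : Matrix α (Fin d) ℝ) (Qs : Matrix ι (Fin d) ℝ)
    {U : Matrix α (Fin r) ℝ} {σ : ℕ → ℝ} {V : Matrix ι (Fin r) ℝ}
    (hsvd : IsSVD (K * Qsᵀ) U σ V) :
    ∃ A B : Matrix (Fin d) (Fin R) ℝ,
      frobSq (K * A * Bᵀ * Qsᵀ - K * Qsᵀ) =
        ∑ j ∈ Finset.univ.filter (fun j : Fin r => R ≤ (j : ℕ)), σ ((j : ℕ) + 1) ^ 2 := by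
  classical
  set D : Matrix (Fin r) (Fin r) ℝ :=
    Matrix.diagonal (fun i : Fin r => σ ((i : ℕ) + 1)) with hD
  set E : Matrix (Fin r) (Fin R) ℝ :=
    Matrix.of (fun j k => if (j : ℕ) = (k : ℕ) then (1:ℝ) else 0) with hE
  set D' : Matrix (Fin r) (Fin R) ℝ :=
    Matrix.of (fun j k => if (j : ℕ) = (k : ℕ) ∧ σ ((j : ℕ) + 1) ≠ 0
      then (σ ((j : ℕ) + 1) ^ 2)⁻¹ else 0) with hD'
  set E₀ : Matrix (Fin r) (Fin R) ℝ :=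
    Matrix.of (fun j k => if (j : ℕ) = (k : ℕ) ∧ σ ((j : ℕ) + 1) ≠ 0
      then (1:ℝ) else 0) with hE₀
  refine ⟨Qsᵀ * (V * E), Kᵀ * (K * (Qsᵀ * (V * D'))), ?_⟩
  have hMV : (K * Qsᵀ) * V = U * D := by
    conv_lhs => rw [hsvd.factorization]
    simp only [Matrix.mul_assoc]
    rw [hsvd.rightOrtho, Matrix.mul_one]
  have hKA : K * (Qsᵀ * (V * E)) = U * (D * E) := by
    rw [show K * (Qsᵀ * (V * E)) = ((K * Qsᵀ) * V) * E by simp only [Matrix.mul_assoc],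
      hMV, Matrix.mul_assoc]
  have hDDD' : D * (D * D') = E₀ := by
    ext j k
    rw [hD]
    rw [show (Matrix.diagonal (fun i : Fin r => σ ((i : ℕ) + 1)) *
        (Matrix.diagonal (fun i : Fin r => σ ((i : ℕ) + 1)) * D')) j k
      = σ ((j : ℕ) + 1) * (σ ((j : ℕ) + 1) * D' j k) by
        rw [Matrix.diagonal_mul, Matrix.diagonal_mul]]
    rw [hD', hE₀]
    by_cases h : (j : ℕ) = (k : ℕ) ∧ σ ((j : ℕ) + 1) ≠ 0
    · simp only [Matrix.of_apply, if_pos h]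
      have := h.2
      field_simp
    · simp only [Matrix.of_apply, if_neg h]
      by_cases h2 : (j : ℕ) = (k : ℕ)
      · have hz : σ ((j : ℕ) + 1) = 0 := by
          by_contra hc; exact h ⟨h2, hc⟩
        simp [hz]
      · simp [h2]
  have hQsB : Qs * (Kᵀ * (K * (Qsᵀ * (V * D')))) = V * E₀ := by
    have step1 : Qs * (Kᵀ * (K * (Qsᵀ * (V * D')))) =
        (K * Qsᵀ)ᵀ * ((K * Qsᵀ) * (V * D')) := by
      simp only [Matrix.transpose_mul, Matrix.transpose_transpose, Matrix.mul_assoc]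
    have step2 : (K * Qsᵀ) * (V * D') = U * (D * D') := by
      rw [show (K * Qsᵀ) * (V * D') = ((K * Qsᵀ) * V) * D' by simp only [Matrix.mul_assoc],
        hMV, Matrix.mul_assoc]
    have step3 : (K * Qsᵀ)ᵀ * (U * (D * D')) = V * (D * (D * D')) := by
      conv_lhs => rw [hsvd.factorization]
      simp only [Matrix.transpose_mul, Matrix.transpose_transpose, hD,
        Matrix.diagonal_transpose, Matrix.mul_assoc, ortho_absorb hsvd.leftOrtho]
    rw [step1, step2, step3, hDDD']
  have hDtr : (D * E) * E₀ᵀ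
      = Matrix.diagonal (fun j : Fin r => if (j : ℕ) < R then σ ((j : ℕ) + 1) else 0) := by
    ext j l
    rw [Matrix.mul_apply]
    have hDE : ∀ k : Fin R, (D * E) j k = if (j : ℕ) = (k : ℕ) then σ ((j : ℕ) + 1) else 0 := by
      intro k
      rw [hD, Matrix.diagonal_mul, hE]
      simp only [Matrix.of_apply]
      by_cases h : (j : ℕ) = (k : ℕ) <;> simp [h]
    by_cases hjR : (j : ℕ) < R
    · rw [Finset.sum_eq_single (⟨(j : ℕ), hjR⟩ : Fin R)]
      · rw [hDE]
        simp only [Matrix.transpose_apply, hE₀, Matrix.of_apply]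
        by_cases hjl : j = l
        · subst hjl
          simp only [Matrix.diagonal_apply_eq, if_pos hjR]
          by_cases hσ : σ ((j : ℕ) + 1) = 0 <;> simp [hσ]
        · have hvne : (l : ℕ) ≠ (j : ℕ) := fun hc => hjl (Fin.ext hc.symm)
          rw [Matrix.diagonal_apply_ne _ hjl]
          simp [hvne]
      · intro k _ hk
        have : (j : ℕ) ≠ (k : ℕ) := by
          intro hc
          exact hk (Fin.ext hc.symm)
        rw [hDE, if_neg this, zero_mul]
      · intro hnot
        exact absurd (Finset.mem_univ _) hnot
    · rw [Finset.sum_eq_zero]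
      · symm
        by_cases hjl : j = l
        · subst hjl
          simp [Matrix.diagonal_apply_eq, hjR]
        · rw [Matrix.diagonal_apply_ne _ hjl]
      · intro k _
        have : (j : ℕ) ≠ (k : ℕ) := by
          have := k.2
          omega
        rw [hDE, if_neg this, zero_mul]
  have happrox : K * (Qsᵀ * (V * E)) * (Kᵀ * (K * (Qsᵀ * (V * D'))))ᵀ * Qsᵀ
      = U * Matrix.diagonal (fun j : Fin r => if (j : ℕ) < R then σ ((j : ℕ) + 1) else 0) * Vᵀ := by
    have h1 : K * (Qsᵀ * (V * E)) * (Kᵀ * (K * (Qsᵀ * (V * D'))))ᵀ * Qsᵀ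
        = (K * (Qsᵀ * (V * E))) * (Qs * (Kᵀ * (K * (Qsᵀ * (V * D')))))ᵀ := by
      simp only [Matrix.transpose_mul, Matrix.transpose_transpose, Matrix.mul_assoc]
    rw [h1, hKA, hQsB, Matrix.transpose_mul]
    rw [show U * (D * E) * (E₀ᵀ * Vᵀ) = U * ((D * E) * E₀ᵀ) * Vᵀ by
      simp only [Matrix.mul_assoc], hDtr]
  rw [happrox]
  have hsub : U * Matrix.diagonal (fun j : Fin r => if (j : ℕ) < R then σ ((j : ℕ) + 1) else 0) * Vᵀ
      - K * Qsᵀ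
      = U * Matrix.diagonal (fun j : Fin r =>
          (if (j : ℕ) < R then σ ((j : ℕ) + 1) else 0) - σ ((j : ℕ) + 1)) * Vᵀ := by
    conv_lhs => rw [hsvd.factorization]
    rw [← Matrix.diagonal_sub, ← Matrix.sub_mul, ← Matrix.mul_sub]
  rw [hsub, frobSq_UDV hsvd.leftOrtho hsvd.rightOrtho]
  rw [Finset.sum_filter]
  apply Finset.sum_congr rfl
  intro j _
  by_cases h : (j : ℕ) < R
  · simp [h, Nat.not_le.mpr h]
  · simp [h, Nat.le_of_not_lt h]


lemma frobNorm_sq {α β : Type*} [Fintype α] [Fintype β] (M : Matrix α β ℝ) :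
    frobNorm M ^ 2 = frobSq M :=
  Real.sq_sqrt (frobSq_nonneg M)

lemma frobSq_stack {m T T' : Type*} [Fintype m] [Fintype T] [Fintype T']
    (X : m → Matrix T T' ℝ) :
    ∑ i, frobSq (X i) = frobSq (Matrix.of fun t (p : m × T') => X p.1 t p.2) := by
  simp only [frobSq, Matrix.of_apply]
  rw [Finset.sum_comm]
  apply Finset.sum_congr rfl
  intro t _
  rw [Fintype.sum_prod_type]

/-- Theorem 5 (KQ-SVD paper): in grouped-query attention, where `m` full-column-rank
query caches `Q_1, …, Q_m` share a single key cache `K`, the grouped minimization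
with separate matrices `B_i` per query head achieves the same optimal value as the
single-`B` minimization with the vertically stacked query matrix. -/
theorem gqa_equivalence (T d m R : ℕ) (hm : 1 ≤ m) (hR : R ≤ d)
    (K : Matrix (Fin T) (Fin d) ℝ)
    (Q : Fin m → Matrix (Fin T) (Fin d) ℝ)
    (hQ : ∀ i, (Q i).rank = d) :
    sInf {e : ℝ | ∃ (A : Matrix (Fin d) (Fin R) ℝ)
          (B : Fin m → Matrix (Fin d) (Fin R) ℝ),
        e = ∑ i, frobNorm (K * A * (B i)ᵀ * (Q i)ᵀ - K * (Q i)ᵀ) ^ 2} =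
      sInf {e : ℝ | ∃ A B : Matrix (Fin d) (Fin R) ℝ,
        e = frobNorm
          (K * A * Bᵀ * (Matrix.of fun (p : Fin m × Fin T) (j : Fin d) =>
              Q p.1 p.2 j)ᵀ -
            K * (Matrix.of fun (p : Fin m × Fin T) (j : Fin d) =>
              Q p.1 p.2 j)ᵀ) ^ 2} := by
  classical
  set Qt : Matrix (Fin m × Fin T) (Fin d) ℝ :=
    Matrix.of (fun (p : Fin m × Fin T) (j : Fin d) => Q p.1 p.2 j) with hQt
  obtain ⟨r, U, σv, V, hsvd, hpos⟩ := exists_svd (K * Qtᵀ)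
  set τ : ℝ :=
    ∑ j ∈ Finset.univ.filter (fun j : Fin r => R ≤ (j : ℕ)), σv ((j : ℕ) + 1) ^ 2 with hτ
  have hval : ∀ (A : Matrix (Fin d) (Fin R) ℝ) (B : Fin m → Matrix (Fin d) (Fin R) ℝ),
      ∑ i, frobNorm (K * A * (B i)ᵀ * (Q i)ᵀ - K * (Q i)ᵀ) ^ 2
      = frobSq ((K * A) *
          (Matrix.of fun (p : Fin m × Fin T) (k : Fin R) => ((Q p.1) * (B p.1)) p.2 k)ᵀ
          - K * Qtᵀ) := by
    intro A B
    calc ∑ i, frobNorm (K * A * (B i)ᵀ * (Q i)ᵀ - K * (Q i)ᵀ) ^ 2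
        = ∑ i, frobSq (K * A * (B i)ᵀ * (Q i)ᵀ - K * (Q i)ᵀ) :=
          Finset.sum_congr rfl (fun i _ => frobNorm_sq _)
    _ = frobSq (Matrix.of fun t (p : Fin m × Fin T) =>
          (K * A * (B p.1)ᵀ * (Q p.1)ᵀ - K * (Q p.1)ᵀ) t p.2) :=
          frobSq_stack _
    _ = _ := by
        congr 1
        ext t p
        have h1 : K * A * (B p.1)ᵀ * (Q p.1)ᵀ = (K * A) * ((Q p.1) * (B p.1))ᵀ := by
          rw [Matrix.transpose_mul]
          simp only [Matrix.mul_assoc]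
        simp only [Matrix.of_apply, Matrix.sub_apply, h1, Matrix.mul_apply,
          Matrix.transpose_apply, Matrix.of_apply, hQt]
        congr 1
        simp only [Finset.sum_mul, Finset.mul_sum]
        rw [Finset.sum_comm]
        apply Finset.sum_congr rfl
        intro x _
        apply Finset.sum_congr rfl
        intro y _
        apply Finset.sum_congr rfl
        intro z _
        ring
  have hlow : ∀ (A : Matrix (Fin d) (Fin R) ℝ) (B : Fin m → Matrix (Fin d) (Fin R) ℝ),
      τ ≤ ∑ i, frobNorm (K * A * (B i)ᵀ * (Q i)ᵀ - K * (Q i)ᵀ) ^ 2 := by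
    intro A B
    rw [hval A B]
    obtain ⟨r', U', σ', V', hsvd', hpos'⟩ := exists_svd ((K * A) *
      (Matrix.of fun (p : Fin m × Fin T) (k : Fin R) => ((Q p.1) * (B p.1)) p.2 k)ᵀ)
    have hrank : ((K * A) * (Matrix.of fun (p : Fin m × Fin T) (k : Fin R) =>
        ((Q p.1) * (B p.1)) p.2 k)ᵀ).rank ≤ R := by
      calc _ ≤ (K * A).rank := Matrix.rank_mul_le_left _ _
      _ ≤ Fintype.card (Fin R) := Matrix.rank_le_card_width _
      _ = R := Fintype.card_fin R
    exact ey_lower hsvd hsvd' (le_trans (svd_r_le_rank hsvd' hpos') hrank)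
  have hconst : ∀ (A B : Matrix (Fin d) (Fin R) ℝ),
      ∑ i, frobNorm (K * A * Bᵀ * (Q i)ᵀ - K * (Q i)ᵀ) ^ 2
      = frobNorm (K * A * Bᵀ * Qtᵀ - K * Qtᵀ) ^ 2 := by
    intro A B
    rw [frobNorm_sq, hval A (fun _ => B)]
    congr 2
    have hC : (Matrix.of fun (p : Fin m × Fin T) (k : Fin R) => ((Q p.1) * B) p.2 k)
        = Qt * B := by
      ext p k
      simp [hQt, Matrix.mul_apply]
    rw [hC, Matrix.transpose_mul]
    simp only [Matrix.mul_assoc]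
  obtain ⟨A₀, B₀, hAB⟩ := ey_upper R K Qt hsvd
  have hup : frobNorm (K * A₀ * B₀ᵀ * Qtᵀ - K * Qtᵀ) ^ 2 = τ := by
    rw [frobNorm_sq, hAB]
  have h1 : IsLeast {e : ℝ | ∃ (A : Matrix (Fin d) (Fin R) ℝ)
          (B : Fin m → Matrix (Fin d) (Fin R) ℝ),
        e = ∑ i, frobNorm (K * A * (B i)ᵀ * (Q i)ᵀ - K * (Q i)ᵀ) ^ 2} τ := by
    constructor
    · exact ⟨A₀, fun _ => B₀, by rw [hconst A₀ B₀, hup]⟩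
    · rintro e ⟨A, B, rfl⟩
      exact hlow A B
  have h2 : IsLeast {e : ℝ | ∃ A B : Matrix (Fin d) (Fin R) ℝ,
        e = frobNorm (K * A * Bᵀ * Qtᵀ - K * Qtᵀ) ^ 2} τ := by
    constructor
    · exact ⟨A₀, B₀, hup.symm⟩
    · rintro e ⟨A, B, rfl⟩
      rw [← hconst A B]
      exact hlow A (fun _ => B)
  rw [h1.csInf_eq, h2.csInf_eq]
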